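/- Let π : Ã* → G be an m-epi, let A = (Q, q₀, T, E) be a trim Ã-automaton, and let (p, a, q) ∈ E for some a ∈ Ã. Let B be the Ã-automaton obtained from A by adding the edge (q, a⁻¹, p). Then (L(B))π ⊆ ⟨(L(A))π⟩, the subgroup of G generated by (L(A))π. -/
import Mathlib


/-!  Common framework: words over an involutive alphabet Ã = A ∪ A⁻¹ (modelled as
`α × Bool`), free reduction, matched epimorphisms, Stallings sections and
Ã-automata, following Silva–Soler-Escrivà–Ventura. -/

/-- A word over the involutive alphabet Ã = A ∪ A⁻¹: the letter `(a, tt)` denotes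
`a` and `(a, ff)` denotes `a⁻¹` (the `FreeGroup` convention). -/
abbrev Word (α : Type) : Type := List (α × Bool)

namespace Stallings

instance {β : Type} : HasSubset (Language β) := ⟨fun L M => ∀ w ∈ L, w ∈ M⟩
instance {β : Type} : Union (Language β) := ⟨fun L M => {w | w ∈ L ∨ w ∈ M}⟩
instance {β : Type} : Inter (Language β) := ⟨fun L M => {w | w ∈ L ∧ w ∈ M}⟩
instance {β : Type} : EmptyCollection (Language β) := ⟨(∅ : Set (List β))⟩

variable {α : Type} {G : Type} [Group G]

/-- The formal inverse of a letter of Ã. -/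
def letterInv (x : α × Bool) : α × Bool := (x.1, !x.2)

/-- The formal inverse `w⁻¹` of a word over Ã. -/
def wordInv (w : Word α) : Word α := (w.map letterInv).reverse

/-- The free reduction `w̄` of a word over Ã (iterated deletion of factors `a a⁻¹`). -/
noncomputable def redW (w : Word α) : Word α :=
  letI := Classical.decEq α
  FreeGroup.reduce w

/-- The reduction `L̄` of a language over Ã. -/
noncomputable def red (L : Language (α × Bool)) : Language (α × Bool) :=
  redW '' L

/-- The set `R_A` of reduced words over Ã. -/
noncomputable def Reduced : Language (α × Bool) := {w | redW w = w}

/-- Evaluation of a monoid homomorphism `π : Ã* → G` at a word. -/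
def ev (π : FreeMonoid (α × Bool) →* G) (w : Word α) : G :=
  π (FreeMonoid.ofList w)

/-- The image of a language under (evaluation of) `π`. -/
def evImg (π : FreeMonoid (α × Bool) →* G) (L : Language (α × Bool)) : Set G :=
  {g | ∃ w ∈ L, ev π w = g}

/-- A matched epimorphism (m-epi) `π : Ã* → G`: a surjective monoid homomorphism
sending formal inverses to inverses. -/
structure IsMEpi (π : FreeMonoid (α × Bool) →* G) : Prop where
  surjective : Function.Surjective π
  matched : ∀ (a : α) (b : Bool),
    π (FreeMonoid.of (a, !b)) = (π (FreeMonoid.of (a, b)))⁻¹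

/-- `S_X = Xπ⁻¹ ∩ S`, for `X ⊆ G`. -/
def sub (S : Language (α × Bool)) (π : FreeMonoid (α × Bool) →* G) (X : Set G) :
    Language (α × Bool) :=
  {w ∈ S | ev π w ∈ X}

/-- A Stallings section for an m-epi `π : Ã* → G`: a regular section `S ⊆ R_A`
such that each `S_g` is regular (S1), and `S_{gh} ⊆ (S_g S_h)‾` (S2). -/
structure IsStallingsSection (π : FreeMonoid (α × Bool) →* G)
    (S : Language (α × Bool)) : Prop where
  regular : S.IsRegular
  reduced : S ⊆ Reduced
  inv_mem : ∀ w ∈ S, wordInv w ∈ S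
  exists_rep : ∀ g : G, ∃ w ∈ S, ev π w = g
  s1 : ∀ g : G, (sub S π {g}).IsRegular
  s2 : ∀ g h : G, sub S π {g * h} ⊆ red (sub S π {g} * sub S π {h})

/-- A group has a Stallings section if some m-epi onto it (from the free monoid on
an involutive finite alphabet) admits a Stallings section. -/
def HasStallingsSection (G : Type) [Group G] : Prop :=
  ∃ (α : Type) (π : FreeMonoid (α × Bool) →* G) (S : Language (α × Bool)),
    Finite α ∧ IsMEpi π ∧ IsStallingsSection π S

/-- `Pref L`: the set of prefixes of words of `L`. -/
def Pref (L : Language (α × Bool)) : Language (α × Bool) :=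
  {u | ∃ v, u ++ v ∈ L}

/-- An extendable Stallings section: every `u ∈ S` admits a reduced word `v` with
`u vⁿ ∈ S` for all `n` and `u ∈ Pref (S_{(u vⁿ u⁻¹)π})` for almost all `n`. -/
def Extendable (π : FreeMonoid (α × Bool) →* G) (S : Language (α × Bool)) : Prop :=
  ∀ u ∈ S, ∃ v : Word α, v ∈ Reduced ∧
    (∀ n : ℕ, u ++ (List.replicate n v).flatten ∈ S) ∧
    ∃ N : ℕ, ∀ n ≥ N, u ∈ Pref (sub S π {ev π u * (ev π v) ^ n * (ev π u)⁻¹})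

/-- An Ã-automaton with state type `Q`, initial state `start`, terminal states
`accept` and edge set `edges`. -/
structure Automaton (β : Type) (Q : Type) where
  start : Q
  accept : Set Q
  edges : Set (Q × β × Q)

namespace Automaton

variable {β Q : Type}

/-- `M.Path p w q`: there is a path from `p` to `q` labelled `w`. -/
inductive Path (M : Automaton β Q) : Q → List β → Q → Prop
  | nil (q : Q) : Path M q [] q
  | cons {p q r : Q} {a : β} {w : List β} :
      (p, a, q) ∈ M.edges → Path M q w r → Path M p (a :: w) r

/-- The language recognized by an automaton. -/
def lang (M : Automaton β Q) : Language β :=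
  {w | ∃ t ∈ M.accept, M.Path M.start w t}

/-- A trim automaton: every state lies on some successful path. -/
def Trim (M : Automaton β Q) : Prop :=
  ∀ q : Q, ∃ (u v : List β) (t : Q), t ∈ M.accept ∧ M.Path M.start u q ∧ M.Path q v t

/-- An involutive Ã-automaton. -/
def Involutive {α : Type} (M : Automaton (α × Bool) Q) : Prop :=
  ∀ p a q, (p, a, q) ∈ M.edges → (q, letterInv a, p) ∈ M.edges

/-- A deterministic automaton. -/
def Deterministic (M : Automaton β Q) : Prop :=
  ∀ p a q q', (p, a, q) ∈ M.edges → (p, a, q') ∈ M.edges → q = q'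

/-- An inverse automaton: involutive, deterministic, trim, with a single
terminal state. -/
def IsInverse {α : Type} (M : Automaton (α × Bool) Q) : Prop :=
  M.Involutive ∧ M.Deterministic ∧ M.Trim ∧ ∃ t : Q, M.accept = {t}

/-- The automaton obtained by identifying the states `p` and `q` (the quotient is
realized on the same state type, redirecting `q` to `p`). -/
def merge [DecidableEq Q] (M : Automaton β Q) (p q : Q) : Automaton β Q :=
  let f : Q → Q := fun x => if x = q then p else x
  { start := f M.start
    accept := f '' M.accept
    edges := {e | ∃ e' ∈ M.edges, e = (f e'.1, e'.2.1, f e'.2.2)} }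

end Automaton

namespace Automaton

theorem Path.append {β Q : Type} {M : Automaton β Q} {x y z : Q} {u v : List β}
    (hu : M.Path x u y) (hv : M.Path y v z) : M.Path x (u ++ v) z := by
  induction hu with
  | nil => simpa using hv
  | cons he _ ih => exact Path.cons he (ih hv)

end Automaton

theorem ev_append {α G : Type} [Group G] (π : FreeMonoid (α × Bool) →* G)
    (u v : Word α) : ev π (u ++ v) = ev π u * ev π v := by
  have : FreeMonoid.ofList (u ++ v) = FreeMonoid.ofList u * FreeMonoid.ofList v := rfl
  simp [ev, this]

theorem ev_cons {α G : Type} [Group G] (π : FreeMonoid (α × Bool) →* G)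
    (b : α × Bool) (v : Word α) : ev π (b :: v) = π (FreeMonoid.of b) * ev π v := by
  have : FreeMonoid.ofList (b :: v) = FreeMonoid.of b * FreeMonoid.ofList v := rfl
  simp [ev, this]

end Stallings
open Stallings in
/-- Adding, to a trim Ã-automaton `M` with edge `(p, a, q)`, the
inverse edge `(q, a⁻¹, p)`, the resulting automaton `B` satisfies
`(L(B))π ⊆ ⟨(L(M))π⟩`. -/
theorem lang_addInverseEdge_subset_closure {α G Q : Type} [Finite α] [Group G]
    (π : FreeMonoid (α × Bool) →* G) (hπ : IsMEpi π)
    (M : Automaton (α × Bool) Q) (hM : M.Trim)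
    (p q : Q) (a : α × Bool) (he : (p, a, q) ∈ M.edges) :
    evImg π ({ M with edges := insert (q, letterInv a, p) M.edges }
        : Automaton (α × Bool) Q).lang
      ⊆ ↑(Subgroup.closure (evImg π M.lang)) := by
  classical
  set H := Subgroup.closure (evImg π M.lang) with hH
  set B : Automaton (α × Bool) Q :=
    { M with edges := insert (q, letterInv a, p) M.edges } with hB
  choose u v t ht hu hv using hM
  set g : Q → G := fun x => ev π (u x) with hg
  -- any word of L(M) maps into H
  have hlang : ∀ w ∈ M.lang, ev π w ∈ H :=
    fun w hw => Subgroup.subset_closure ⟨w, hw, rfl⟩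
  -- u x ++ v x ∈ L(M)
  have hk : ∀ x : Q, g x * ev π (v x) ∈ H := by
    intro x
    rw [← ev_append]
    exact hlang _ ⟨t x, ht x, (hu x).append (hv x)⟩
  -- key lemma on paths of B
  have key : ∀ {x : Q} {w : Word α} {y : Q}, B.Path x w y →
      g x * ev π w * (g y)⁻¹ ∈ H := by
    intro x w y hpath
    induction hpath with
    | nil z =>
      have h0 : ev π ([] : Word α) = 1 := map_one π
      have : g z * ev π ([] : Word α) * (g z)⁻¹ = 1 := by rw [h0]; group
      rw [this]; exact one_mem H
    | @cons x' y' z' b w' he' hp' ih =>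
      have hedge : g x' * π (FreeMonoid.of b) * (g y')⁻¹ ∈ H := by
        rcases he' with he' | he'
        · -- new edge: (x', b, y') = (q, letterInv a, p)
          have hx : x' = q := congrArg Prod.fst he'
          have hb : b = letterInv a := congrArg (fun e => e.2.1) he'
          have hy : y' = p := congrArg (fun e => e.2.2) he'
          rw [hx, hb, hy]
          have hinv : π (FreeMonoid.of (letterInv a)) = (π (FreeMonoid.of a))⁻¹ := by
            have := hπ.matched a.1 a.2
            simpa [letterInv] using this
          have h2 : g p * π (FreeMonoid.of a) * ev π (v q) ∈ H := by
            have : (u p ++ a :: v q) ∈ M.lang :=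
              ⟨t q, ht q, (hu p).append (Automaton.Path.cons he (hv q))⟩
            have := hlang _ this
            rwa [ev_append, ev_cons, ← mul_assoc] at this
          have : g q * π (FreeMonoid.of (letterInv a)) * (g p)⁻¹ =
              (g q * ev π (v q)) * (g p * π (FreeMonoid.of a) * ev π (v q))⁻¹ := by
            rw [hinv]; group
          rw [this]
          exact mul_mem (hk q) (inv_mem h2)
        · -- old edge of M
          have h1 : g x' * π (FreeMonoid.of b) * ev π (v y') ∈ H := by
            have : (u x' ++ b :: v y') ∈ M.lang :=
              ⟨t y', ht y', (hu x').append (Automaton.Path.cons he' (hv y'))⟩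
            have := hlang _ this
            rwa [ev_append, ev_cons, ← mul_assoc] at this
          have : g x' * π (FreeMonoid.of b) * (g y')⁻¹ =
              (g x' * π (FreeMonoid.of b) * ev π (v y')) * (g y' * ev π (v y'))⁻¹ := by
            group
          rw [this]
          exact mul_mem h1 (inv_mem (hk y'))
      have := mul_mem hedge ih
      rw [ev_cons]
      have heq : g x' * (π (FreeMonoid.of b) * ev π w') * (g z')⁻¹ =
          (g x' * π (FreeMonoid.of b) * (g y')⁻¹) * (g y' * ev π w' * (g z')⁻¹) := by
        group
      rw [heq]
      exact mul_mem hedge ih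
  -- g M.start ∈ H
  have hstart : g M.start ∈ H := by
    have hv0 : ev π (v M.start) ∈ H :=
      hlang _ ⟨t M.start, ht M.start, hv M.start⟩
    have := mul_mem (hk M.start) (inv_mem hv0)
    simpa using this
  -- for terminal states, g ∈ H
  have hterm : ∀ x ∈ M.accept, g x ∈ H := by
    intro x hx
    exact hlang _ ⟨x, hx, hu x⟩
  -- conclude
  rintro _ ⟨w, ⟨tt, htt, hpath⟩, rfl⟩
  have hB1 : B.start = M.start := rfl
  have hB2 : B.accept = M.accept := rfl
  have hkey := key hpath
  have : ev π w = (g M.start)⁻¹ * (g M.start * ev π w * (g tt)⁻¹) * g tt := by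
    group
  rw [this]
  exact mul_mem (mul_mem (inv_mem hstart) hkey) (hterm tt htt)
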